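/- If a prime p with p ≡ 5 (mod 8) divides the central value e of a primitive magic square of squares, then p divides none of the mid-edge values b, d, f, h. -/

import Mathlib

/-- A magic square of squares: integers `a,…,i` whose squares, arranged in a
3×3 grid with rows `(a²,b²,c²)`, `(d²,e²,f²)`, `(g²,h²,i²)`, are pairwise
distinct and all rows, columns and both main diagonals sum to `T`. -/
def IsMagicSquareOfSquares (a b c d e f g h i T : ℤ) : Prop :=
  ([a^2, b^2, c^2, d^2, e^2, f^2, g^2, h^2, i^2] : List ℤ).Pairwise (· ≠ ·) ∧
  a^2 + b^2 + c^2 = T ∧ d^2 + e^2 + f^2 = T ∧ g^2 + h^2 + i^2 = T ∧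
  a^2 + d^2 + g^2 = T ∧ b^2 + e^2 + h^2 = T ∧ c^2 + f^2 + i^2 = T ∧
  a^2 + e^2 + i^2 = T ∧ c^2 + e^2 + g^2 = T

/-- A magic square of squares is primitive if the gcd of its nine entries is 1. -/
def IsPrimitive (a b c d e f g h i : ℤ) : Prop :=
  Int.gcd (a^2) (Int.gcd (b^2) (Int.gcd (c^2) (Int.gcd (d^2) (Int.gcd (e^2)
    (Int.gcd (f^2) (Int.gcd (g^2) (Int.gcd (h^2) (i^2)))))))) = 1

lemma key_allzero (p : ℕ) [Fact p.Prime] (hp5 : p % 8 = 5)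
    (A B C D E F G H I T : ZMod p)
    (e1 : A^2 + B^2 + C^2 = T) (e2 : D^2 + E^2 + F^2 = T)
    (e3 : G^2 + H^2 + I^2 = T) (e4 : A^2 + D^2 + G^2 = T)
    (e5 : B^2 + E^2 + H^2 = T) (e6 : C^2 + F^2 + I^2 = T)
    (e7 : A^2 + E^2 + I^2 = T) (e8 : C^2 + E^2 + G^2 = T)
    (hE : E = 0) (hB : B = 0) :
    A = 0 ∧ C = 0 ∧ D = 0 ∧ F = 0 ∧ G = 0 ∧ H = 0 ∧ I = 0 := by
  have hT : T = 3 * E^2 := by linear_combination e1 + e3 - e5 - e7 - e8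
  have hT0 : T = 0 := by rw [hT, hE]; ring
  have hH : H = 0 := by
    have : H ^ 2 = 0 := by linear_combination e5 - B * hB - E * hE + hT0
    exact sq_eq_zero_iff.mp this
  have hAC : A^2 = -C^2 := by linear_combination e1 - B * hB + hT0
  have hI2 : I^2 = C^2 := by linear_combination e7 - E * hE + hT0 - hAC
  have hG2 : G^2 = -C^2 := by linear_combination e8 - E * hE + hT0
  have hD2 : D^2 = 2 * C^2 := by linear_combination e4 + hT0 - hAC - hG2
  by_cases hC : C = 0
  · have hA : A = 0 := sq_eq_zero_iff.mp (by rw [hAC, hC]; ring)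
    have hG : G = 0 := sq_eq_zero_iff.mp (by rw [hG2, hC]; ring)
    have hI : I = 0 := sq_eq_zero_iff.mp (by rw [hI2, hC]; ring)
    have hD : D = 0 := sq_eq_zero_iff.mp (by rw [hD2, hC]; ring)
    have hF : F = 0 := sq_eq_zero_iff.mp (by
      linear_combination e2 - D * hD - E * hE + hT0)
    exact ⟨hA, hC, hD, hF, hG, hH, hI⟩
  · exfalso
    have hsq : IsSquare (2 : ZMod p) := ⟨D / C, by field_simp; linear_combination -hD2⟩
    have hpne2 : p ≠ 2 := by omega
    rw [ZMod.exists_sq_eq_two_iff hpne2] at hsq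
    omega

lemma gcd_contra (a b c d e f g h i : ℤ) (p : ℕ) (hp : p.Prime)
    (hprim : IsPrimitive a b c d e f g h i)
    (ha : (p:ℤ) ∣ a) (hb : (p:ℤ) ∣ b) (hc : (p:ℤ) ∣ c)
    (hd : (p:ℤ) ∣ d) (he : (p:ℤ) ∣ e) (hf : (p:ℤ) ∣ f)
    (hg : (p:ℤ) ∣ g) (hh : (p:ℤ) ∣ h) (hi : (p:ℤ) ∣ i) : False := by
  have dvd2 : ∀ x : ℤ, (p:ℤ) ∣ x → (p:ℤ) ∣ x ^ 2 := fun x hx => dvd_pow hx two_ne_zero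
  have key : (p:ℤ) ∣ (Int.gcd (a^2) (Int.gcd (b^2) (Int.gcd (c^2) (Int.gcd (d^2) (Int.gcd (e^2)
      (Int.gcd (f^2) (Int.gcd (g^2) (Int.gcd (h^2) (i^2)))))))) : ℤ) :=
    Int.dvd_coe_gcd (dvd2 a ha) (Int.dvd_coe_gcd (dvd2 b hb) (Int.dvd_coe_gcd (dvd2 c hc)
      (Int.dvd_coe_gcd (dvd2 d hd) (Int.dvd_coe_gcd (dvd2 e he) (Int.dvd_coe_gcd (dvd2 f hf)
        (Int.dvd_coe_gcd (dvd2 g hg) (Int.dvd_coe_gcd (dvd2 h hh) (dvd2 i hi))))))))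
  rw [hprim] at key
  have : (p:ℤ) ∣ 1 := by exact_mod_cast key
  have := Int.eq_one_of_dvd_one (by positivity) this
  have : p = 1 := by exact_mod_cast this
  exact hp.one_lt.ne' this

theorem five_mod_eight_no_midedge (a b c d e f g h i T : ℤ)
    (hms : IsMagicSquareOfSquares a b c d e f g h i T)
    (hprim : IsPrimitive a b c d e f g h i)
    (p : ℕ) (hp : p.Prime) (hp5 : p % 8 = 5) (hde : (p : ℤ) ∣ e) :
    ¬ (p : ℤ) ∣ b ∧ ¬ (p : ℤ) ∣ d ∧ ¬ (p : ℤ) ∣ f ∧ ¬ (p : ℤ) ∣ h := by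
  haveI : Fact p.Prime := ⟨hp⟩
  obtain ⟨-, h1, h2, h3, h4, h5, h6, h7, h8⟩ := hms
  -- cast everything to ZMod p
  have cast_eq : ∀ x y z : ℤ, x^2 + y^2 + z^2 = T →
      ((x : ZMod p))^2 + (y : ZMod p)^2 + (z : ZMod p)^2 = (T : ZMod p) := by
    intro x y z hxyz
    have := congrArg (fun w : ℤ => (w : ZMod p)) hxyz
    push_cast at this
    exact this
  have c1 := cast_eq _ _ _ h1
  have c2 := cast_eq _ _ _ h2
  have c3 := cast_eq _ _ _ h3
  have c4 := cast_eq _ _ _ h4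
  have c5 := cast_eq _ _ _ h5
  have c6 := cast_eq _ _ _ h6
  have c7 := cast_eq _ _ _ h7
  have c8 := cast_eq _ _ _ h8
  have toZ : ∀ x : ℤ, (p:ℤ) ∣ x → (x : ZMod p) = 0 := fun x hx =>
    (ZMod.intCast_zmod_eq_zero_iff_dvd x p).mpr hx
  have fromZ : ∀ x : ℤ, (x : ZMod p) = 0 → (p:ℤ) ∣ x := fun x hx =>
    (ZMod.intCast_zmod_eq_zero_iff_dvd x p).mp hx
  have hE := toZ e hde
  refine ⟨?_, ?_, ?_, ?_⟩
  · intro hdvd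
    obtain ⟨hA, hC, hD, hF, hG, hH, hI⟩ := key_allzero p hp5 _ _ _ _ _ _ _ _ _ _
      c1 c2 c3 c4 c5 c6 c7 c8 hE (toZ b hdvd)
    exact gcd_contra a b c d e f g h i p hp hprim (fromZ a hA) hdvd (fromZ c hC)
      (fromZ d hD) hde (fromZ f hF) (fromZ g hG) (fromZ h hH) (fromZ i hI)
  · intro hdvd
    obtain ⟨hG, hA, hH, hB, hI, hF, hC⟩ := key_allzero p hp5
      (g:ZMod p) (d:ZMod p) (a:ZMod p) (h:ZMod p) (e:ZMod p) (b:ZMod p)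
      (i:ZMod p) (f:ZMod p) (c:ZMod p) (T:ZMod p)
      (by linear_combination c4) (by linear_combination c5) (by linear_combination c6)
      (by linear_combination c3) (by linear_combination c2) (by linear_combination c1)
      (by linear_combination c8) (by linear_combination c7) hE (toZ d hdvd)
    exact gcd_contra a b c d e f g h i p hp hprim (fromZ a hA) (fromZ b hB) (fromZ c hC)
      hdvd hde (fromZ f hF) (fromZ g hG) (fromZ h hH) (fromZ i hI)
  · intro hdvd
    obtain ⟨hC, hI, hB, hH, hA, hD, hG⟩ := key_allzero p hp5
      (c:ZMod p) (f:ZMod p) (i:ZMod p) (b:ZMod p) (e:ZMod p) (h:ZMod p)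
      (a:ZMod p) (d:ZMod p) (g:ZMod p) (T:ZMod p)
      (by linear_combination c6) (by linear_combination c5) (by linear_combination c4)
      (by linear_combination c1) (by linear_combination c2) (by linear_combination c3)
      (by linear_combination c8) (by linear_combination c7) hE (toZ f hdvd)
    exact gcd_contra a b c d e f g h i p hp hprim (fromZ a hA) (fromZ b hB) (fromZ c hC)
      (fromZ d hD) hde hdvd (fromZ g hG) (fromZ h hH) (fromZ i hI)
  · intro hdvd
    obtain ⟨hG, hI, hD, hF, hA, hB, hC⟩ := key_allzero p hp5
      (g:ZMod p) (h:ZMod p) (i:ZMod p) (d:ZMod p) (e:ZMod p) (f:ZMod p)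
      (a:ZMod p) (b:ZMod p) (c:ZMod p) (T:ZMod p)
      (by linear_combination c3) (by linear_combination c2) (by linear_combination c1)
      (by linear_combination c4) (by linear_combination c5) (by linear_combination c6)
      (by linear_combination c8) (by linear_combination c7) hE (toZ h hdvd)
    exact gcd_contra a b c d e f g h i p hp hprim (fromZ a hA) (fromZ b hB) (fromZ c hC)
      (fromZ d hD) hde (fromZ f hF) (fromZ g hG) hdvd (fromZ i hI)
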